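/- In an SMRD design with potential-outcome matrices y(γ), for all γ ≠ γ′ in {tr, ib, is, cc}: Cov(m̂_γ, m̂_{γ′}) = η^B_{γ,γ′}·(I_C I_T/(I_γ I_{γ′}))·(1/(2I))·( ω^B(y(γ)) + ω^B(y(γ′)) − ξ^B(y(γ), y(γ′)) ) + η^S_{γ,γ′}·(J_C J_T/(J_γ J_{γ′}))·(1/(2J))·( ω^S(y(γ)) + ω^S(y(γ′)) − ξ^S(y(γ), y(γ′)) ) + η^B_{γ,γ′} η^S_{γ,γ′}·(I_C I_T J_C J_T/(I_γ J_γ I_{γ′} J_{γ′}))·(1/(2IJ))·( ω^BS(y(γ)) + ω^BS(y(γ′)) − ξ^BS(y(γ), y(γ′)) ). -/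

import Mathlib

open MeasureTheory ProbabilityTheory Finset Filter
open scoped ENNReal NNReal

noncomputable section

namespace SMRD

instance (n : ℕ) : MeasurableSpace (Finset (Fin n)) := ⊤

/-- Uniform probability measure on (the coercion to a set of) a finite set of outcomes. -/
def uniformOn {α : Type*} [MeasurableSpace α] (s : Finset α) : Measure α :=
  ((s.card : ℝ≥0∞))⁻¹ • Measure.count.restrict ↑s

/-- Sample space of an SMRD: a pair (set of treated rows, set of treated columns). -/
abbrev Omg (I J : ℕ) := Finset (Fin I) × Finset (Fin J)

/-- All admissible designs: row sets of size `IT` and column sets of size `JT`. -/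
def designSets (I J IT JT : ℕ) : Finset (Omg I J) :=
  (powersetCard IT (univ : Finset (Fin I))) ×ˢ (powersetCard JT (univ : Finset (Fin J)))

/-- The SMRD design measure: uniform over designs. -/
def smrd (I J IT JT : ℕ) : Measure (Omg I J) := uniformOn (designSets I J IT JT)

/-- Uniform measure over the row-treatment sets alone. -/
def rowMeasure (I IT : ℕ) : Measure (Finset (Fin I)) :=
  uniformOn (powersetCard IT (univ : Finset (Fin I)))

variable {I J : ℕ}

def rowMean (A : Fin I → Fin J → ℝ) (i : Fin I) : ℝ := (∑ j, A i j) / J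
def colMean (A : Fin I → Fin J → ℝ) (j : Fin J) : ℝ := (∑ i, A i j) / I
def grandMean (A : Fin I → Fin J → ℝ) : ℝ := (∑ i, ∑ j, A i j) / ((I : ℝ) * J)
/-- Double decentering. -/
def dcr (A : Fin I → Fin J → ℝ) (i : Fin I) (j : Fin J) : ℝ :=
  A i j - rowMean A i - colMean A j + grandMean A

def omegaB (A : Fin I → Fin J → ℝ) : ℝ :=
  (∑ i, (rowMean A i - grandMean A) ^ 2) / ((I : ℝ) - 1)
def omegaS (A : Fin I → Fin J → ℝ) : ℝ :=
  (∑ j, (colMean A j - grandMean A) ^ 2) / ((J : ℝ) - 1)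
def omegaBS (A : Fin I → Fin J → ℝ) : ℝ :=
  (∑ i, ∑ j, dcr A i j ^ 2) / (((I : ℝ) - 1) * ((J : ℝ) - 1))

def xiB (A A' : Fin I → Fin J → ℝ) : ℝ :=
  (∑ i, ((rowMean A i - grandMean A) - (rowMean A' i - grandMean A')) ^ 2) / ((I : ℝ) - 1)
def xiS (A A' : Fin I → Fin J → ℝ) : ℝ :=
  (∑ j, ((colMean A j - grandMean A) - (colMean A' j - grandMean A')) ^ 2) / ((J : ℝ) - 1)
def xiBS (A A' : Fin I → Fin J → ℝ) : ℝ :=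
  (∑ i, ∑ j, (dcr A i j - dcr A' i j) ^ 2) / (((I : ℝ) - 1) * ((J : ℝ) - 1))

/-- The four groups of an SMRD. -/
inductive Gp | tr | ib | is | cc
  deriving DecidableEq

instance : Fintype Gp := ⟨{Gp.tr, Gp.ib, Gp.is, Gp.cc}, fun x => by cases x <;> simp⟩

/-- Does the group use the treated rows? -/
def rowT : Gp → Bool | .tr => true | .ib => true | .is => false | .cc => false
/-- Does the group use the treated columns? -/
def colT : Gp → Bool | .tr => true | .is => true | .ib => false | .cc => false

def rowSet (ω : Omg I J) (γ : Gp) : Finset (Fin I) := if rowT γ then ω.1 else ω.1ᶜ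
def colSet (ω : Omg I J) (γ : Gp) : Finset (Fin J) := if colT γ then ω.2 else ω.2ᶜ

/-- Deterministic group row size (as a real number). -/
def IszR (I IT : ℕ) (γ : Gp) : ℝ := if rowT γ then (IT : ℝ) else (I : ℝ) - IT
/-- Deterministic group column size (as a real number). -/
def JszR (J JT : ℕ) (γ : Gp) : ℝ := if colT γ then (JT : ℝ) else (J : ℝ) - JT

/-- Sign η^B. -/
def etaB (γ γ' : Gp) : ℝ := if rowT γ = rowT γ' then 1 else -1
/-- Sign η^S. -/
def etaS (γ γ' : Gp) : ℝ := if colT γ = colT γ' then 1 else -1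

/-- Group-mean estimator m̂_γ. -/
def mhat (y : Gp → Fin I → Fin J → ℝ) (γ : Gp) (ω : Omg I J) : ℝ :=
  (∑ i ∈ rowSet ω γ, ∑ j ∈ colSet ω γ, y γ i j) /
    (((rowSet ω γ).card : ℝ) * ((colSet ω γ).card : ℝ))

/-- Covariance of two real random variables. -/
def cov {α : Type*} [MeasurableSpace α] (μ : Measure α) (f g : α → ℝ) : ℝ :=
  ∫ ω, (f ω - ∫ x, f x ∂μ) * (g ω - ∫ x, g x ∂μ) ∂μ

/-- 1-Wasserstein distance between Borel measures on ℝ (infimum over couplings). -/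
def wassersteinDist (μ ν : Measure ℝ) : ℝ≥0∞ :=
  ⨅ (π : Measure (ℝ × ℝ)) (_ : π.map Prod.fst = μ) (_ : π.map Prod.snd = ν),
    ∫⁻ p, ENNReal.ofReal |p.1 - p.2| ∂π

/-- Spectral (ℓ²→ℓ² operator) norm of an I×J matrix. -/
def opNorm (A : Fin I → Fin J → ℝ) : ℝ :=
  ‖LinearMap.toContinuousLinearMap (Matrix.toEuclideanLin (Matrix.of A))‖

/-- Indicator W_i^B. -/
def WB (ω : Omg I J) (i : Fin I) : ℝ := if i ∈ ω.1 then 1 else 0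
/-- Indicator W_j^S. -/
def WS (ω : Omg I J) (j : Fin J) : ℝ := if j ∈ ω.2 then 1 else 0

/-- Within-group row mean Â_{i,•}(γ) (with column index set `Cs`). -/
def rowHat (A : Fin I → Fin J → ℝ) (Cs : Finset (Fin J)) (i : Fin I) : ℝ :=
  (∑ j ∈ Cs, A i j) / (Cs.card : ℝ)
/-- Within-group column mean Â_{•,j}(γ). -/
def colHat (A : Fin I → Fin J → ℝ) (Rs : Finset (Fin I)) (j : Fin J) : ℝ :=
  (∑ i ∈ Rs, A i j) / (Rs.card : ℝ)
/-- Within-group grand mean m̂_γ(A). -/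
def gHat (A : Fin I → Fin J → ℝ) (Rs : Finset (Fin I)) (Cs : Finset (Fin J)) : ℝ :=
  (∑ i ∈ Rs, ∑ j ∈ Cs, A i j) / ((Rs.card : ℝ) * (Cs.card : ℝ))

/-- Empirical within-group covariance of row means. -/
def empRowCov (A B : Fin I → Fin J → ℝ) (γ : Gp) (ω : Omg I J) : ℝ :=
  (∑ i ∈ rowSet ω γ,
      (rowHat A (colSet ω γ) i - gHat A (rowSet ω γ) (colSet ω γ)) *
        (rowHat B (colSet ω γ) i - gHat B (rowSet ω γ) (colSet ω γ))) /
    ((rowSet ω γ).card : ℝ)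

/-- Empirical within-group covariance of column means. -/
def empColCov (A B : Fin I → Fin J → ℝ) (γ : Gp) (ω : Omg I J) : ℝ :=
  (∑ j ∈ colSet ω γ,
      (colHat A (rowSet ω γ) j - gHat A (rowSet ω γ) (colSet ω γ)) *
        (colHat B (rowSet ω γ) j - gHat B (rowSet ω γ) (colSet ω γ))) /
    ((colSet ω γ).card : ℝ)

/-- Empirical within-group covariance of doubly-decentered entries. -/
def empDcrCov (A B : Fin I → Fin J → ℝ) (γ : Gp) (ω : Omg I J) : ℝ :=
  (∑ i ∈ rowSet ω γ, ∑ j ∈ colSet ω γ,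
      (A i j - rowHat A (colSet ω γ) i - colHat A (rowSet ω γ) j +
          gHat A (rowSet ω γ) (colSet ω γ)) *
        (B i j - rowHat B (colSet ω γ) i - colHat B (rowSet ω γ) j +
          gHat B (rowSet ω γ) (colSet ω γ))) /
    (((rowSet ω γ).card : ℝ) * ((colSet ω γ).card : ℝ))

def popRowCov (A B : Fin I → Fin J → ℝ) : ℝ :=
  (∑ i, (rowMean A i - grandMean A) * (rowMean B i - grandMean B)) / (I : ℝ)
def popColCov (A B : Fin I → Fin J → ℝ) : ℝ :=
  (∑ j, (colMean A j - grandMean A) * (colMean B j - grandMean B)) / (J : ℝ)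
def popDcrCov (A B : Fin I → Fin J → ℝ) : ℝ :=
  (∑ i, ∑ j, dcr A i j * dcr B i j) / ((I : ℝ) * (J : ℝ))

instance (n : ℕ) : MeasurableSingletonClass (Finset (Fin n)) := ⟨fun _ => trivial⟩

lemma uniformOn_isFinite {α : Type*} [MeasurableSpace α] [MeasurableSingletonClass α]
    (s : Finset α) : IsFiniteMeasure (uniformOn s) := by
  constructor
  rw [uniformOn]
  simp only [Measure.smul_apply, Measure.restrict_apply MeasurableSet.univ, Set.univ_inter]
  rw [Measure.count_apply_finset]
  refine lt_top_iff_ne_top.2 ?_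
  simp only [smul_eq_mul]
  rcases eq_or_ne ((s.card : ℝ≥0∞)) 0 with h | h
  · simp [h]
  · exact ENNReal.mul_ne_top (ENNReal.inv_ne_top.2 h) (by simp)

lemma integral_uniformOn {α : Type*} [MeasurableSpace α] [MeasurableSingletonClass α]
    [Fintype α] [DecidableEq α] (s : Finset α) (f : α → ℝ) :
    ∫ x, f x ∂(uniformOn s) = (∑ x ∈ s, f x) / s.card := by
  have : IsFiniteMeasure (uniformOn s) := uniformOn_isFinite s
  rw [integral_fintype Integrable.of_finite]
  have hpt : ∀ x : α, (uniformOn s {x}).toReal = if x ∈ s then (s.card : ℝ)⁻¹ else 0 := by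
    intro x
    rw [uniformOn, Measure.smul_apply, Measure.restrict_apply (MeasurableSet.singleton x)]
    by_cases hx : x ∈ s
    · rw [Set.inter_eq_left.2 (by simpa using hx), Measure.count_singleton]
      simp [hx, ENNReal.toReal_inv]
    · have : ({x} : Set α) ∩ ↑s = ∅ := by
        ext y; simp; rintro rfl; exact hx
      simp [this, hx]
  simp only [measureReal_def, hpt, smul_eq_mul, ite_mul, zero_mul]
  rw [Finset.sum_ite_mem, Finset.univ_inter, div_eq_mul_inv, Finset.sum_mul]
  congr 1; ext x; ring


namespace SMRD2
open Finset

lemma cnt1_aux {α : Type*} [DecidableEq α] (s : Finset α) (i : α) (hi : i ∈ s) (k : ℕ)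
    (hk : 1 ≤ k) :
    ((powersetCard k s).filter (fun R => i ∈ R)).card
      = ((s.erase i).powersetCard (k-1)).card := by
  refine Finset.card_bij' (fun R _ => R.erase i) (fun S _ => insert i S) ?hi ?hj ?li ?ri
  case hi =>
    intro R hR
    simp only [mem_filter, mem_powersetCard] at hR
    obtain ⟨⟨hsub, hcard⟩, hiR⟩ := hR
    rw [mem_powersetCard]
    exact ⟨Finset.erase_subset_erase i hsub, by rw [Finset.card_erase_of_mem hiR, hcard]⟩
  case hj =>
    intro S hS
    rw [mem_powersetCard] at hS
    obtain ⟨hsub, hcard⟩ := hS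
    have hiS : i ∉ S := fun h => (Finset.mem_erase.1 (hsub h)).1 rfl
    simp only [mem_filter, mem_powersetCard]
    refine ⟨⟨?_, ?_⟩, Finset.mem_insert_self i S⟩
    · exact Finset.insert_subset hi (hsub.trans (Finset.erase_subset i s))
    · rw [Finset.card_insert_of_notMem hiS, hcard]; omega
  case li => intro R hR; simp only [mem_filter] at hR; exact Finset.insert_erase hR.2
  case ri =>
    intro S hS
    rw [mem_powersetCard] at hS
    have hiS : i ∉ S := fun h => (Finset.mem_erase.1 (hS.1 h)).1 rfl
    exact Finset.erase_insert hiS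

lemma cnt2_aux {α : Type*} [DecidableEq α] (s : Finset α) (i i' : α) (hi : i ∈ s)
    (hne : i' ≠ i) (k : ℕ) (hk : 1 ≤ k) :
    ((powersetCard k s).filter (fun R => i ∈ R ∧ i' ∈ R)).card
      = (((s.erase i).powersetCard (k-1)).filter (fun S => i' ∈ S)).card := by
  refine Finset.card_bij' (fun R _ => R.erase i) (fun S _ => insert i S) ?hi ?hj ?li ?ri
  case hi =>
    intro R hR
    simp only [mem_filter, mem_powersetCard] at hR ⊢
    obtain ⟨⟨hsub, hcard⟩, hiR, hiR'⟩ := hR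
    exact ⟨⟨Finset.erase_subset_erase i hsub,
      by rw [Finset.card_erase_of_mem hiR, hcard]⟩, Finset.mem_erase.2 ⟨hne, hiR'⟩⟩
  case hj =>
    intro S hS
    simp only [mem_filter, mem_powersetCard] at hS
    obtain ⟨⟨hsub, hcard⟩, hi'S⟩ := hS
    have hiS : i ∉ S := fun h => (Finset.mem_erase.1 (hsub h)).1 rfl
    simp only [mem_filter, mem_powersetCard]
    refine ⟨⟨Finset.insert_subset hi (hsub.trans (Finset.erase_subset i s)),
      by rw [Finset.card_insert_of_notMem hiS, hcard]; omega⟩,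
      Finset.mem_insert_self i S, Finset.mem_insert_of_mem hi'S⟩
  case li => intro R hR; simp only [mem_filter] at hR; exact Finset.insert_erase hR.2.1
  case ri =>
    intro S hS
    simp only [mem_filter, mem_powersetCard] at hS
    have hiS : i ∉ S := fun h => (Finset.mem_erase.1 (hS.1.1 h)).1 rfl
    exact Finset.erase_insert hiS

lemma cnt1_val (n k : ℕ) (hk : 1 ≤ k) (i : Fin n) :
    ((powersetCard k (univ : Finset (Fin n))).filter (fun R => i ∈ R)).card
      = (n-1).choose (k-1) := by
  rw [cnt1_aux univ i (mem_univ i) k hk, Finset.card_powersetCard,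
    Finset.card_erase_of_mem (mem_univ i), Finset.card_univ, Fintype.card_fin]

lemma cnt2_val (n k : ℕ) (hn : 2 ≤ n) (hk : 1 ≤ k) (i i' : Fin n) (hne : i' ≠ i) :
    (n - 1) * ((powersetCard k (univ : Finset (Fin n))).filter
        (fun R => i ∈ R ∧ i' ∈ R)).card
      = (k - 1) * (n-1).choose (k-1) := by
  rw [cnt2_aux univ i i' (mem_univ i) hne k hk]
  rcases Nat.lt_or_ge k 2 with h2 | h2
  · have hk1 : k = 1 := by omega
    subst hk1
    simp only [Nat.sub_self, Finset.powersetCard_zero]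
    rw [Finset.filter_singleton]
    simp
  · have hi' : i' ∈ (univ : Finset (Fin n)).erase i := Finset.mem_erase.2 ⟨hne, mem_univ i'⟩
    rw [cnt1_aux _ i' hi' (k-1) (by omega),
      Finset.card_powersetCard, Finset.card_erase_of_mem hi',
      Finset.card_erase_of_mem (mem_univ i), Finset.card_univ, Fintype.card_fin]
    have h := Nat.add_one_mul_choose_eq (n-2) (k-2)
    rw [show n-2+1 = n-1 by omega, show k-2+1 = k-1 by omega] at h
    rw [show n - 1 - 1 = n - 2 by omega, show k - 1 - 1 = k - 2 by omega]
    rw [h]; ring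

end SMRD2

namespace SMRD3
open Finset SMRD2

lemma sum_mem_ite {n : ℕ} (R : Finset (Fin n)) (f : Fin n → ℝ) :
    ∑ i ∈ R, f i = ∑ i, if i ∈ R then f i else 0 := by
  rw [Finset.sum_ite_mem, Finset.univ_inter]

lemma L1 (n k : ℕ) (hk : 1 ≤ k) (f : Fin n → ℝ) :
    ∑ R ∈ powersetCard k (univ : Finset (Fin n)), ∑ i ∈ R, f i
      = ((n-1).choose (k-1) : ℝ) * ∑ i, f i := by
  refine Eq.trans (Finset.sum_congr rfl fun R _ => sum_mem_ite R f) ?_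
  rw [Finset.sum_comm, Finset.mul_sum]
  refine Finset.sum_congr rfl fun i _ => ?_
  rw [← Finset.sum_filter, Finset.sum_const, cnt1_val n k hk i, nsmul_eq_mul]

lemma L2 (n k : ℕ) (hn : 2 ≤ n) (hk : 1 ≤ k) (f g : Fin n → ℝ) (hf : ∑ i, f i = 0) :
    ∑ R ∈ powersetCard k (univ : Finset (Fin n)), (∑ i ∈ R, f i) * (∑ i ∈ R, g i)
      = (((n-1).choose (k-1) : ℝ) * ((n:ℝ) - k) / ((n:ℝ) - 1)) * ∑ i, f i * g i := by
  classical
  set c1 : ℝ := ((n-1).choose (k-1) : ℝ) with hc1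
  set c2 : ℝ := c1 * ((k:ℝ) - 1) / ((n:ℝ) - 1) with hc2
  have hn1 : ((n:ℝ) - 1) ≠ 0 := by
    have : (2:ℝ) ≤ n := by exact_mod_cast hn
    linarith
  have key : ∀ i i' : Fin n,
      ((((powersetCard k (univ : Finset (Fin n))).filter
          (fun R => i ∈ R ∧ i' ∈ R)).card : ℝ)) = if i' = i then c1 else c2 := by
    intro i i'
    by_cases h : i' = i
    · subst h
      rw [if_pos rfl, hc1]
      have heq : (powersetCard k (univ : Finset (Fin n))).filter (fun R => i' ∈ R ∧ i' ∈ R)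
          = (powersetCard k (univ : Finset (Fin n))).filter (fun R => i' ∈ R) :=
        Finset.filter_congr (fun R _ => by tauto)
      rw [heq, cnt1_val n k hk i']
    · rw [if_neg h]
      have hnat := cnt2_val n k hn hk i i' h
      have : ((n:ℝ) - 1) * ((((powersetCard k (univ : Finset (Fin n))).filter
          (fun R => i ∈ R ∧ i' ∈ R)).card : ℝ)) = ((k:ℝ) - 1) * c1 := by
        have h1 : (1:ℕ) ≤ n := by omega
        have := congrArg (fun m : ℕ => (m : ℝ)) hnat
        push_cast [Nat.cast_sub h1, Nat.cast_sub hk] at this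
        exact this
      rw [hc2]
      field_simp
      linarith [this]
  calc ∑ R ∈ powersetCard k (univ : Finset (Fin n)), (∑ i ∈ R, f i) * (∑ i ∈ R, g i)
      = ∑ R ∈ powersetCard k (univ : Finset (Fin n)), ∑ i, ∑ i',
          (if i ∈ R then f i else 0) * (if i' ∈ R then g i' else 0) := by
        refine Finset.sum_congr rfl fun R _ => ?_
        rw [sum_mem_ite, sum_mem_ite R g, Finset.sum_mul_sum]
    _ = ∑ i, ∑ i', ∑ R ∈ powersetCard k (univ : Finset (Fin n)),
          (if i ∈ R then f i else 0) * (if i' ∈ R then g i' else 0) := by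
        rw [Finset.sum_comm]
        refine Finset.sum_congr rfl fun i _ => ?_
        rw [Finset.sum_comm]
    _ = ∑ i, ∑ i', (if i' = i then c1 else c2) * (f i * g i') := by
        refine Finset.sum_congr rfl fun i _ => ?_
        refine Finset.sum_congr rfl fun i' _ => ?_
        have : ∀ R : Finset (Fin n),
            (if i ∈ R then f i else 0) * (if i' ∈ R then g i' else 0)
              = if i ∈ R ∧ i' ∈ R then f i * g i' else 0 := by
          intro R; by_cases h1 : i ∈ R <;> by_cases h2 : i' ∈ R <;> simp [h1, h2]
        simp_rw [this]
        rw [← Finset.sum_filter, Finset.sum_const, nsmul_eq_mul, key i i']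
    _ = ∑ i, ∑ i', (c2 * (f i * g i') + (if i' = i then (c1 - c2) * (f i * g i') else 0)) := by
        refine Finset.sum_congr rfl fun i _ => Finset.sum_congr rfl fun i' _ => ?_
        by_cases h : i' = i <;> simp [h] <;> ring
    _ = c2 * ((∑ i, f i) * (∑ i', g i')) + (c1 - c2) * ∑ i, f i * g i := by
        simp_rw [Finset.sum_add_distrib]
        rw [Finset.sum_mul_sum]
        congr 1
        · rw [Finset.mul_sum]
          refine Finset.sum_congr rfl fun i _ => ?_
          rw [Finset.mul_sum]
        · rw [Finset.mul_sum]
          refine Finset.sum_congr rfl fun i _ => ?_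
          rw [Finset.sum_ite_eq' univ i (fun i' => (c1 - c2) * (f i * g i'))]
          simp
    _ = (c1 * ((n:ℝ) - k) / ((n:ℝ) - 1)) * ∑ i, f i * g i := by
        have hcc : c1 - c2 = c1 * ((n:ℝ) - k) / ((n:ℝ) - 1) := by
          rw [hc2]; field_simp; ring
        rw [hf, hcc]; ring

end SMRD3


section Alg
open SMRD2 SMRD3

variable {I J : ℕ}

lemma sum_aeff (hI : (I:ℝ) ≠ 0) (hJ : (J:ℝ) ≠ 0) (A : Fin I → Fin J → ℝ) :
    ∑ i, (rowMean A i - grandMean A) = 0 := by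
  simp only [rowMean, grandMean]
  rw [Finset.sum_sub_distrib, Finset.sum_const, Finset.card_univ, Fintype.card_fin,
    ← Finset.sum_div, nsmul_eq_mul]
  field_simp
  ring

lemma sum_beff (hI : (I:ℝ) ≠ 0) (hJ : (J:ℝ) ≠ 0) (A : Fin I → Fin J → ℝ) :
    ∑ j, (colMean A j - grandMean A) = 0 := by
  simp only [colMean, grandMean]
  rw [Finset.sum_sub_distrib, Finset.sum_const, Finset.card_univ, Fintype.card_fin,
    ← Finset.sum_div, nsmul_eq_mul, Finset.sum_comm]
  field_simp
  ring

lemma dcr_row (hI : (I:ℝ) ≠ 0) (hJ : (J:ℝ) ≠ 0) (A : Fin I → Fin J → ℝ) (i : Fin I) :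
    ∑ j, dcr A i j = 0 := by
  simp only [dcr]
  have h1 : ∑ j, colMean A j = (J : ℝ) * grandMean A := by
    simp only [colMean, grandMean]
    rw [← Finset.sum_div, Finset.sum_comm]
    field_simp
  have h2 : ∑ j, A i j = (J : ℝ) * rowMean A i := by
    simp only [rowMean]; field_simp
  calc ∑ j, (A i j - rowMean A i - colMean A j + grandMean A)
      = (∑ j, A i j) - (J:ℝ) * rowMean A i - (∑ j, colMean A j) + (J:ℝ) * grandMean A := by
        rw [Finset.sum_add_distrib, Finset.sum_sub_distrib, Finset.sum_sub_distrib,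
          Finset.sum_const, Finset.sum_const, Finset.card_univ, Fintype.card_fin,
          nsmul_eq_mul, nsmul_eq_mul]
    _ = 0 := by rw [h1, h2]; ring

lemma dcr_col (hI : (I:ℝ) ≠ 0) (hJ : (J:ℝ) ≠ 0) (A : Fin I → Fin J → ℝ) (j : Fin J) :
    ∑ i, dcr A i j = 0 := by
  simp only [dcr]
  have h1 : ∑ i, rowMean A i = (I : ℝ) * grandMean A := by
    simp only [rowMean, grandMean]
    rw [← Finset.sum_div]
    field_simp
  have h2 : ∑ i, A i j = (I : ℝ) * colMean A j := by
    simp only [colMean]; field_simp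
  calc ∑ i, (A i j - rowMean A i - colMean A j + grandMean A)
      = (∑ i, A i j) - (∑ i, rowMean A i) - (I:ℝ) * colMean A j + (I:ℝ) * grandMean A := by
        rw [Finset.sum_add_distrib, Finset.sum_sub_distrib, Finset.sum_sub_distrib,
          Finset.sum_const, Finset.sum_const, Finset.card_univ, Fintype.card_fin,
          nsmul_eq_mul, nsmul_eq_mul]
    _ = 0 := by rw [h1, h2]; ring

lemma sum_block (A : Fin I → Fin J → ℝ) (R : Finset (Fin I)) (C : Finset (Fin J)) :
    ∑ i ∈ R, ∑ j ∈ C, A i j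
      = (R.card : ℝ) * (C.card : ℝ) * grandMean A
        + (C.card : ℝ) * (∑ i ∈ R, (rowMean A i - grandMean A))
        + (R.card : ℝ) * (∑ j ∈ C, (colMean A j - grandMean A))
        + ∑ i ∈ R, ∑ j ∈ C, dcr A i j := by
  have hpt : ∀ i j, A i j = grandMean A + (rowMean A i - grandMean A)
      + (colMean A j - grandMean A) + dcr A i j := by
    intro i j; simp only [dcr]; ring
  have hrow : ∀ i, ∑ j ∈ C, A i j
      = (C.card : ℝ) * grandMean A + (C.card : ℝ) * (rowMean A i - grandMean A)
        + (∑ j ∈ C, (colMean A j - grandMean A)) + ∑ j ∈ C, dcr A i j := by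
    intro i
    rw [Finset.sum_congr rfl fun j _ => hpt i j]
    rw [Finset.sum_add_distrib, Finset.sum_add_distrib, Finset.sum_add_distrib,
      Finset.sum_const, Finset.sum_const, nsmul_eq_mul, nsmul_eq_mul]
    try ring
  rw [Finset.sum_congr rfl fun i _ => hrow i]
  rw [Finset.sum_add_distrib, Finset.sum_add_distrib, Finset.sum_add_distrib,
    Finset.sum_const, Finset.sum_const, nsmul_eq_mul, nsmul_eq_mul,
    ← Finset.mul_sum]
  try ring

lemma sum_compl_neg {n : ℕ} (f : Fin n → ℝ) (hs : ∑ i, f i = 0) (R : Finset (Fin n)) :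
    ∑ i ∈ Rᶜ, f i = - ∑ i ∈ R, f i := by
  have h := Finset.sum_compl_add_sum R f
  rw [hs] at h
  linarith

/-- Sign e^B. -/
def eB (γ : Gp) : ℝ := if rowT γ then 1 else -1
/-- Sign e^S. -/
def eS (γ : Gp) : ℝ := if colT γ then 1 else -1

lemma etaB_eq (γ γ' : Gp) : etaB γ γ' = eB γ * eB γ' := by
  unfold etaB eB
  cases h1 : rowT γ <;> cases h2 : rowT γ' <;> simp [h1, h2]

lemma etaS_eq (γ γ' : Gp) : etaS γ γ' = eS γ * eS γ' := by
  unfold etaS eS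
  cases h1 : colT γ <;> cases h2 : colT γ' <;> simp [h1, h2]

lemma mhat_eq {IT JT : ℕ} (hI : 2 ≤ I) (hJ : 2 ≤ J)
    (hIT1 : 1 ≤ IT) (hIT2 : IT ≤ I - 1) (hJT1 : 1 ≤ JT) (hJT2 : JT ≤ J - 1)
    (y : Gp → Fin I → Fin J → ℝ) (γ : Gp) (ω : Omg I J)
    (h1 : ω.1.card = IT) (h2 : ω.2.card = JT) :
    mhat y γ ω = grandMean (y γ)
      + eB γ * (∑ i ∈ ω.1, (rowMean (y γ) i - grandMean (y γ))) / IszR I IT γ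
      + eS γ * (∑ j ∈ ω.2, (colMean (y γ) j - grandMean (y γ))) / JszR J JT γ
      + eB γ * eS γ * (∑ i ∈ ω.1, ∑ j ∈ ω.2, dcr (y γ) i j)
          / (IszR I IT γ * JszR J JT γ) := by
  have hI0 : (I:ℝ) ≠ 0 := by positivity
  have hJ0 : (J:ℝ) ≠ 0 := by positivity
  have hITR : (IT:ℝ) ≠ 0 := by
    have : 0 < IT := hIT1; positivity
  have hJTR : (JT:ℝ) ≠ 0 := by
    have : 0 < JT := hJT1; positivity
  have hITle : IT ≤ I := by omega
  have hJTle : JT ≤ J := by omega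
  have hcastI : ((I - IT : ℕ) : ℝ) = (I:ℝ) - IT := by
    push_cast [Nat.cast_sub hITle]; ring
  have hcastJ : ((J - JT : ℕ) : ℝ) = (J:ℝ) - JT := by
    push_cast [Nat.cast_sub hJTle]; ring
  have hITc : ((I:ℝ) - IT) ≠ 0 := by
    have h5 : IT < I := by omega
    have : (IT:ℝ) < I := by exact_mod_cast h5
    linarith
  have hJTc : ((J:ℝ) - JT) ≠ 0 := by
    have h5 : JT < J := by omega
    have : (JT:ℝ) < J := by exact_mod_cast h5
    linarith
  have hcard1 : ((ω.1ᶜ).card : ℝ) = (I:ℝ) - IT := by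
    rw [Finset.card_compl, h1, Fintype.card_fin, hcastI]
  have hcard2 : ((ω.2ᶜ).card : ℝ) = (J:ℝ) - JT := by
    rw [Finset.card_compl, h2, Fintype.card_fin, hcastJ]
  have hsa := sum_aeff hI0 hJ0 (y γ)
  have hsb := sum_beff hI0 hJ0 (y γ)
  have hdr := dcr_row hI0 hJ0 (y γ)
  have hdc := dcr_col hI0 hJ0 (y γ)
  -- complements of the dcr block sums
  have hdL : ∀ C : Finset (Fin J), ∑ i ∈ ω.1ᶜ, ∑ j ∈ C, dcr (y γ) i j
      = - ∑ i ∈ ω.1, ∑ j ∈ C, dcr (y γ) i j := by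
    intro C
    refine sum_compl_neg _ ?_ _
    rw [Finset.sum_comm]
    refine Finset.sum_eq_zero fun j _ => hdc j
  have hdR : ∀ R : Finset (Fin I), ∑ i ∈ R, ∑ j ∈ ω.2ᶜ, dcr (y γ) i j
      = - ∑ i ∈ R, ∑ j ∈ ω.2, dcr (y γ) i j := by
    intro R
    rw [← Finset.sum_neg_distrib]
    refine Finset.sum_congr rfl fun i _ => ?_
    exact sum_compl_neg _ (hdr i) _
  have haC := sum_compl_neg _ hsa ω.1
  have hbC := sum_compl_neg _ hsb ω.2
  cases hB : rowT γ <;> cases hS : colT γ <;>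
    simp only [mhat, rowSet, colSet, IszR, JszR, eB, eS, hB, hS, Bool.false_eq_true,
      if_true, if_false, ite_true, ite_false, reduceIte]
  · -- rowT = false, colT = false : uses complements both
    rw [sum_block, hcard1, hcard2, hdR, hdL, haC, hbC]
    field_simp
  · -- rowT = false, colT = true
    rw [sum_block, hcard1, h2, hdL, haC]
    field_simp
  · -- rowT = true, colT = false
    rw [sum_block, h1, hcard2, hdR, hbC]
    field_simp
  · -- rowT = true, colT = true
    rw [sum_block, h1, h2]
    field_simp

end Alg


section Core
open SMRD2 SMRD3 Finset

/-- coefficient K = choose(n-1,k-1)*(n-k)/(n-1). -/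
def Kc (n k : ℕ) : ℝ := ((n-1).choose (k-1) : ℝ) * ((n:ℝ) - k) / ((n:ℝ) - 1)

lemma core (I J IT JT : ℕ) (hI : 2 ≤ I) (hJ : 2 ≤ J) (hIT1 : 1 ≤ IT) (hJT1 : 1 ≤ JT)
    (a a' : Fin I → ℝ) (b b' : Fin J → ℝ) (r r' : Fin I → Fin J → ℝ)
    (ha : ∑ i, a i = 0) (ha' : ∑ i, a' i = 0)
    (hb : ∑ j, b j = 0) (hb' : ∑ j, b' j = 0)
    (hrrow : ∀ i, ∑ j, r i j = 0) (hrcol : ∀ j, ∑ i, r i j = 0)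
    (hr'row : ∀ i, ∑ j, r' i j = 0) (hr'col : ∀ j, ∑ i, r' i j = 0)
    (p1 p2 p3 q1 q2 q3 : ℝ) :
    ∑ R ∈ powersetCard IT (univ : Finset (Fin I)),
      ∑ C ∈ powersetCard JT (univ : Finset (Fin J)),
        (p1 * ∑ i ∈ R, a i + p2 * ∑ j ∈ C, b j + p3 * ∑ i ∈ R, ∑ j ∈ C, r i j)
          * (q1 * ∑ i ∈ R, a' i + q2 * ∑ j ∈ C, b' j + q3 * ∑ i ∈ R, ∑ j ∈ C, r' i j)
      = ((powersetCard JT (univ : Finset (Fin J))).card : ℝ) * (p1 * q1)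
            * (Kc I IT * ∑ i, a i * a' i)
        + ((powersetCard IT (univ : Finset (Fin I))).card : ℝ) * (p2 * q2)
            * (Kc J JT * ∑ j, b j * b' j)
        + (p3 * q3) * (Kc I IT * (Kc J JT * ∑ i, ∑ j, r i j * r' i j)) := by
  set P := powersetCard IT (univ : Finset (Fin I)) with hP
  set Q := powersetCard JT (univ : Finset (Fin J)) with hQ
  -- L1-type vanishing facts
  have hL1a : ∀ (f : Fin I → ℝ), (∑ i, f i = 0) → ∑ R ∈ P, ∑ i ∈ R, f i = 0 := by
    intro f hf
    rw [hP, L1 I IT hIT1 f, hf, mul_zero]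
  have hL1b : ∀ (g : Fin J → ℝ), (∑ j, g j = 0) → ∑ C ∈ Q, ∑ j ∈ C, g j = 0 := by
    intro g hg
    rw [hQ, L1 J JT hJT1 g, hg, mul_zero]
  -- vanishing of block sums over Q for fixed R
  have hw'0 : ∀ R : Finset (Fin I), ∑ C ∈ Q, ∑ i ∈ R, ∑ j ∈ C, r' i j = 0 := by
    intro R
    rw [Finset.sum_comm]
    refine Finset.sum_eq_zero fun i _ => hL1b (r' i) (hr'row i)
  -- the nine term sums
  have E1 : ∑ R ∈ P, ∑ C ∈ Q, ((∑ i ∈ R, a i) * (∑ i ∈ R, a' i))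
      = (Q.card : ℝ) * (Kc I IT * ∑ i, a i * a' i) := by
    have : ∀ R ∈ P, ∑ C ∈ Q, ((∑ i ∈ R, a i) * (∑ i ∈ R, a' i))
        = (Q.card : ℝ) * ((∑ i ∈ R, a i) * (∑ i ∈ R, a' i)) := by
      intro R _; rw [Finset.sum_const, nsmul_eq_mul]
    rw [Finset.sum_congr rfl this, ← Finset.mul_sum, hP, L2 I IT hI hIT1 a a' ha]
    rw [Kc]
  have E2 : ∑ R ∈ P, ∑ C ∈ Q, ((∑ i ∈ R, a i) * (∑ j ∈ C, b' j)) = 0 := by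
    refine Finset.sum_eq_zero fun R _ => ?_
    rw [← Finset.mul_sum, hL1b b' hb', mul_zero]
  have E3 : ∑ R ∈ P, ∑ C ∈ Q, ((∑ i ∈ R, a i) * (∑ i ∈ R, ∑ j ∈ C, r' i j)) = 0 := by
    refine Finset.sum_eq_zero fun R _ => ?_
    rw [← Finset.mul_sum, hw'0 R, mul_zero]
  have E4 : ∑ R ∈ P, ∑ C ∈ Q, ((∑ j ∈ C, b j) * (∑ i ∈ R, a' i)) = 0 := by
    refine Finset.sum_eq_zero fun R _ => ?_
    have : ∀ C ∈ Q, (∑ j ∈ C, b j) * (∑ i ∈ R, a' i)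
        = (∑ i ∈ R, a' i) * (∑ j ∈ C, b j) := fun C _ => mul_comm _ _
    rw [Finset.sum_congr rfl this, ← Finset.mul_sum, hL1b b hb, mul_zero]
  have E5 : ∑ R ∈ P, ∑ C ∈ Q, ((∑ j ∈ C, b j) * (∑ j ∈ C, b' j))
      = (P.card : ℝ) * (Kc J JT * ∑ j, b j * b' j) := by
    have : ∀ R ∈ P, ∑ C ∈ Q, ((∑ j ∈ C, b j) * (∑ j ∈ C, b' j))
        = Kc J JT * ∑ j, b j * b' j := by
      intro R _; rw [hQ, L2 J JT hJ hJT1 b b' hb, Kc]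
    rw [Finset.sum_congr rfl this, Finset.sum_const, nsmul_eq_mul]
  have E6 : ∑ R ∈ P, ∑ C ∈ Q, ((∑ j ∈ C, b j) * (∑ i ∈ R, ∑ j ∈ C, r' i j)) = 0 := by
    have hstep : ∀ R ∈ P, ∑ C ∈ Q, ((∑ j ∈ C, b j) * (∑ i ∈ R, ∑ j ∈ C, r' i j))
        = Kc J JT * ∑ j, b j * (∑ i ∈ R, r' i j) := by
      intro R _
      have hcomm : ∀ C ∈ Q, (∑ j ∈ C, b j) * (∑ i ∈ R, ∑ j ∈ C, r' i j)
          = (∑ j ∈ C, b j) * (∑ j ∈ C, ∑ i ∈ R, r' i j) := by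
        intro C _; rw [Finset.sum_comm]
      rw [Finset.sum_congr rfl hcomm, hQ, L2 J JT hJ hJT1 b (fun j => ∑ i ∈ R, r' i j) hb, Kc]
    rw [Finset.sum_congr rfl hstep, ← Finset.mul_sum]
    have : ∑ R ∈ P, ∑ j, b j * (∑ i ∈ R, r' i j)
        = ∑ j, b j * (∑ R ∈ P, ∑ i ∈ R, r' i j) := by
      rw [Finset.sum_comm]
      refine Finset.sum_congr rfl fun j _ => ?_
      rw [Finset.mul_sum]
    rw [this]
    have : ∀ j ∈ (univ : Finset (Fin J)), b j * (∑ R ∈ P, ∑ i ∈ R, r' i j) = 0 := by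
      intro j _
      rw [hL1a (fun i => r' i j) (hr'col j), mul_zero]
    rw [Finset.sum_eq_zero this, mul_zero]
  have E7 : ∑ R ∈ P, ∑ C ∈ Q, ((∑ i ∈ R, ∑ j ∈ C, r i j) * (∑ i ∈ R, a' i)) = 0 := by
    refine Finset.sum_eq_zero fun R _ => ?_
    have : ∀ C ∈ Q, (∑ i ∈ R, ∑ j ∈ C, r i j) * (∑ i ∈ R, a' i)
        = (∑ i ∈ R, a' i) * (∑ i ∈ R, ∑ j ∈ C, r i j) := fun C _ => mul_comm _ _
    rw [Finset.sum_congr rfl this, ← Finset.mul_sum]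
    have hw0 : ∑ C ∈ Q, ∑ i ∈ R, ∑ j ∈ C, r i j = 0 := by
      rw [Finset.sum_comm]
      refine Finset.sum_eq_zero fun i _ => hL1b (r i) (hrrow i)
    rw [hw0, mul_zero]
  have E8 : ∑ R ∈ P, ∑ C ∈ Q, ((∑ i ∈ R, ∑ j ∈ C, r i j) * (∑ j ∈ C, b' j)) = 0 := by
    have hstep : ∀ R ∈ P, ∑ C ∈ Q, ((∑ i ∈ R, ∑ j ∈ C, r i j) * (∑ j ∈ C, b' j))
        = Kc J JT * ∑ j, (∑ i ∈ R, r i j) * b' j := by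
      intro R _
      have hcomm : ∀ C ∈ Q, (∑ i ∈ R, ∑ j ∈ C, r i j) * (∑ j ∈ C, b' j)
          = (∑ j ∈ C, ∑ i ∈ R, r i j) * (∑ j ∈ C, b' j) := by
        intro C _; rw [Finset.sum_comm]
      have hz : ∑ j, ∑ i ∈ R, r i j = 0 := by
        rw [Finset.sum_comm]
        refine Finset.sum_eq_zero fun i _ => hrrow i
      rw [Finset.sum_congr rfl hcomm, hQ, L2 J JT hJ hJT1 (fun j => ∑ i ∈ R, r i j) b' hz, Kc]
    rw [Finset.sum_congr rfl hstep, ← Finset.mul_sum]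
    have : ∑ R ∈ P, ∑ j, (∑ i ∈ R, r i j) * b' j
        = ∑ j, (∑ R ∈ P, ∑ i ∈ R, r i j) * b' j := by
      rw [Finset.sum_comm]
      refine Finset.sum_congr rfl fun j _ => ?_
      rw [Finset.sum_mul]
    rw [this]
    have : ∀ j ∈ (univ : Finset (Fin J)), (∑ R ∈ P, ∑ i ∈ R, r i j) * b' j = 0 := by
      intro j _
      rw [hL1a (fun i => r i j) (hrcol j), zero_mul]
    rw [Finset.sum_eq_zero this, mul_zero]
  have E9 : ∑ R ∈ P, ∑ C ∈ Q, ((∑ i ∈ R, ∑ j ∈ C, r i j) * (∑ i ∈ R, ∑ j ∈ C, r' i j))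
      = Kc I IT * (Kc J JT * ∑ i, ∑ j, r i j * r' i j) := by
    rw [Finset.sum_comm]
    have hstep : ∀ C ∈ Q, ∑ R ∈ P, ((∑ i ∈ R, ∑ j ∈ C, r i j) * (∑ i ∈ R, ∑ j ∈ C, r' i j))
        = Kc I IT * ∑ i, (∑ j ∈ C, r i j) * (∑ j ∈ C, r' i j) := by
      intro C _
      have hz : ∑ i, ∑ j ∈ C, r i j = 0 := by
        rw [Finset.sum_comm]
        refine Finset.sum_eq_zero fun j _ => hrcol j
      rw [hP, L2 I IT hI hIT1 (fun i => ∑ j ∈ C, r i j) (fun i => ∑ j ∈ C, r' i j) hz, Kc]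
    rw [Finset.sum_congr rfl hstep, ← Finset.mul_sum]
    congr 1
    have : ∑ C ∈ Q, ∑ i, (∑ j ∈ C, r i j) * (∑ j ∈ C, r' i j)
        = ∑ i, ∑ C ∈ Q, (∑ j ∈ C, r i j) * (∑ j ∈ C, r' i j) := Finset.sum_comm
    rw [this]
    rw [Finset.mul_sum]
    refine Finset.sum_congr rfl fun i _ => ?_
    rw [hQ, L2 J JT hJ hJT1 (r i) (r' i) (hrrow i), Kc]
  -- expand the product summand into nine terms
  have hsplit : ∀ (R : Finset (Fin I)) (C : Finset (Fin J)),
      (p1 * ∑ i ∈ R, a i + p2 * ∑ j ∈ C, b j + p3 * ∑ i ∈ R, ∑ j ∈ C, r i j)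
        * (q1 * ∑ i ∈ R, a' i + q2 * ∑ j ∈ C, b' j + q3 * ∑ i ∈ R, ∑ j ∈ C, r' i j)
      = (p1*q1) * ((∑ i ∈ R, a i) * (∑ i ∈ R, a' i))
        + (p1*q2) * ((∑ i ∈ R, a i) * (∑ j ∈ C, b' j))
        + (p1*q3) * ((∑ i ∈ R, a i) * (∑ i ∈ R, ∑ j ∈ C, r' i j))
        + (p2*q1) * ((∑ j ∈ C, b j) * (∑ i ∈ R, a' i))
        + (p2*q2) * ((∑ j ∈ C, b j) * (∑ j ∈ C, b' j))
        + (p2*q3) * ((∑ j ∈ C, b j) * (∑ i ∈ R, ∑ j ∈ C, r' i j))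
        + (p3*q1) * ((∑ i ∈ R, ∑ j ∈ C, r i j) * (∑ i ∈ R, a' i))
        + (p3*q2) * ((∑ i ∈ R, ∑ j ∈ C, r i j) * (∑ j ∈ C, b' j))
        + (p3*q3) * ((∑ i ∈ R, ∑ j ∈ C, r i j) * (∑ i ∈ R, ∑ j ∈ C, r' i j)) := by
    intro R C; ring
  have hbig : ∑ R ∈ P, ∑ C ∈ Q,
        (p1 * ∑ i ∈ R, a i + p2 * ∑ j ∈ C, b j + p3 * ∑ i ∈ R, ∑ j ∈ C, r i j)
          * (q1 * ∑ i ∈ R, a' i + q2 * ∑ j ∈ C, b' j + q3 * ∑ i ∈ R, ∑ j ∈ C, r' i j)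
      = (p1*q1) * (∑ R ∈ P, ∑ C ∈ Q, ((∑ i ∈ R, a i) * (∑ i ∈ R, a' i)))
        + (p1*q2) * (∑ R ∈ P, ∑ C ∈ Q, ((∑ i ∈ R, a i) * (∑ j ∈ C, b' j)))
        + (p1*q3) * (∑ R ∈ P, ∑ C ∈ Q, ((∑ i ∈ R, a i) * (∑ i ∈ R, ∑ j ∈ C, r' i j)))
        + (p2*q1) * (∑ R ∈ P, ∑ C ∈ Q, ((∑ j ∈ C, b j) * (∑ i ∈ R, a' i)))
        + (p2*q2) * (∑ R ∈ P, ∑ C ∈ Q, ((∑ j ∈ C, b j) * (∑ j ∈ C, b' j)))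
        + (p2*q3) * (∑ R ∈ P, ∑ C ∈ Q, ((∑ j ∈ C, b j) * (∑ i ∈ R, ∑ j ∈ C, r' i j)))
        + (p3*q1) * (∑ R ∈ P, ∑ C ∈ Q, ((∑ i ∈ R, ∑ j ∈ C, r i j) * (∑ i ∈ R, a' i)))
        + (p3*q2) * (∑ R ∈ P, ∑ C ∈ Q, ((∑ i ∈ R, ∑ j ∈ C, r i j) * (∑ j ∈ C, b' j)))
        + (p3*q3) * (∑ R ∈ P, ∑ C ∈ Q,
            ((∑ i ∈ R, ∑ j ∈ C, r i j) * (∑ i ∈ R, ∑ j ∈ C, r' i j))) := by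
        rw [Finset.sum_congr rfl fun R _ => Finset.sum_congr rfl fun C _ => hsplit R C]
        simp only [Finset.sum_add_distrib, ← Finset.mul_sum]
  rw [hbig, E1, E2, E3, E4, E5, E6, E7, E8, E9]
  ring

end Core


section Final
open SMRD2 SMRD3 Finset

lemma mean_pieces (I J IT JT : ℕ) (hIT1 : 1 ≤ IT) (hJT1 : 1 ≤ JT)
    (a : Fin I → ℝ) (b : Fin J → ℝ) (r : Fin I → Fin J → ℝ)
    (ha : ∑ i, a i = 0) (hb : ∑ j, b j = 0) (hrrow : ∀ i, ∑ j, r i j = 0)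
    (c1 c2 c3 : ℝ) :
    ∑ ω ∈ designSets I J IT JT,
      (c1 * ∑ i ∈ ω.1, a i + c2 * ∑ j ∈ ω.2, b j + c3 * ∑ i ∈ ω.1, ∑ j ∈ ω.2, r i j) = 0 := by
  simp only [designSets, Finset.sum_product]
  have hL1b : ∀ (g : Fin J → ℝ), (∑ j, g j = 0) →
      ∑ C ∈ powersetCard JT (univ : Finset (Fin J)), ∑ j ∈ C, g j = 0 := by
    intro g hg
    rw [L1 J JT hJT1 g, hg, mul_zero]
  simp only [Finset.sum_add_distrib]
  have hA : ∑ R ∈ powersetCard IT (univ : Finset (Fin I)),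
      ∑ C ∈ powersetCard JT (univ : Finset (Fin J)), c1 * ∑ i ∈ R, a i = 0 := by
    have hh : ∀ R ∈ powersetCard IT (univ : Finset (Fin I)),
        ∑ C ∈ powersetCard JT (univ : Finset (Fin J)), c1 * ∑ i ∈ R, a i
          = (((powersetCard JT (univ : Finset (Fin J))).card : ℝ) * c1) * ∑ i ∈ R, a i := by
      intro R _; rw [Finset.sum_const, nsmul_eq_mul]; ring
    rw [Finset.sum_congr rfl hh, ← Finset.mul_sum, L1 I IT hIT1 a, ha, mul_zero, mul_zero]
  have hB : ∑ R ∈ powersetCard IT (univ : Finset (Fin I)),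
      ∑ C ∈ powersetCard JT (univ : Finset (Fin J)), c2 * ∑ j ∈ C, b j = 0 := by
    refine Finset.sum_eq_zero fun R _ => ?_
    rw [← Finset.mul_sum, hL1b b hb, mul_zero]
  have hC : ∑ R ∈ powersetCard IT (univ : Finset (Fin I)),
      ∑ C ∈ powersetCard JT (univ : Finset (Fin J)), c3 * ∑ i ∈ R, ∑ j ∈ C, r i j = 0 := by
    refine Finset.sum_eq_zero fun R _ => ?_
    rw [← Finset.mul_sum]
    have hw : ∑ C ∈ powersetCard JT (univ : Finset (Fin J)), ∑ i ∈ R, ∑ j ∈ C, r i j = 0 := by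
      rw [Finset.sum_comm]
      exact Finset.sum_eq_zero fun i _ => hL1b (r i) (hrrow i)
    rw [hw, mul_zero]
  rw [hA, hB, hC]; ring

lemma omegaB_comb {I J : ℕ} (A A' : Fin I → Fin J → ℝ) :
    omegaB A + omegaB A' - xiB A A'
      = 2 * (∑ i, (rowMean A i - grandMean A) * (rowMean A' i - grandMean A'))
          / ((I:ℝ) - 1) := by
  unfold omegaB xiB
  rw [← add_div, div_sub_div_same]
  congr 1
  rw [← Finset.sum_add_distrib, ← Finset.sum_sub_distrib, Finset.mul_sum]
  exact Finset.sum_congr rfl fun i _ => by ring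

lemma omegaS_comb {I J : ℕ} (A A' : Fin I → Fin J → ℝ) :
    omegaS A + omegaS A' - xiS A A'
      = 2 * (∑ j, (colMean A j - grandMean A) * (colMean A' j - grandMean A'))
          / ((J:ℝ) - 1) := by
  unfold omegaS xiS
  rw [← add_div, div_sub_div_same]
  congr 1
  rw [← Finset.sum_add_distrib, ← Finset.sum_sub_distrib, Finset.mul_sum]
  exact Finset.sum_congr rfl fun j _ => by ring

lemma omegaBS_comb {I J : ℕ} (A A' : Fin I → Fin J → ℝ) :
    omegaBS A + omegaBS A' - xiBS A A'
      = 2 * (∑ i, ∑ j, dcr A i j * dcr A' i j) / (((I:ℝ) - 1) * ((J:ℝ) - 1)) := by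
  unfold omegaBS xiBS
  rw [← add_div, div_sub_div_same]
  congr 1
  rw [← Finset.sum_add_distrib, ← Finset.sum_sub_distrib, Finset.mul_sum]
  refine Finset.sum_congr rfl fun i _ => ?_
  rw [← Finset.sum_add_distrib, ← Finset.sum_sub_distrib, Finset.mul_sum]
  exact Finset.sum_congr rfl fun j _ => by ring

end Final

set_option maxHeartbeats 4000000 in
/-- Exact covariance between two distinct group-mean estimators. -/
theorem stmt8 (I J IT JT : ℕ) (hI : 2 ≤ I) (hJ : 2 ≤ J)
    (hIT1 : 1 ≤ IT) (hIT2 : IT ≤ I - 1) (hJT1 : 1 ≤ JT) (hJT2 : JT ≤ J - 1)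
    (y : Gp → Fin I → Fin J → ℝ) (γ γ' : Gp) (hne : γ ≠ γ') :
    cov (smrd I J IT JT) (mhat y γ) (mhat y γ') =
      etaB γ γ' * ((((I : ℝ) - IT) * IT) / (IszR I IT γ * IszR I IT γ')) * (1 / (2 * I)) *
          (omegaB (y γ) + omegaB (y γ') - xiB (y γ) (y γ')) +
        etaS γ γ' * ((((J : ℝ) - JT) * JT) / (JszR J JT γ * JszR J JT γ')) * (1 / (2 * J)) *
          (omegaS (y γ) + omegaS (y γ') - xiS (y γ) (y γ')) +
        etaB γ γ' * etaS γ γ' *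
          ((((I : ℝ) - IT) * IT * ((J : ℝ) - JT) * JT) /
            (IszR I IT γ * JszR J JT γ * IszR I IT γ' * JszR J JT γ')) *
          (1 / (2 * (I : ℝ) * J)) *
          (omegaBS (y γ) + omegaBS (y γ') - xiBS (y γ) (y γ')) := by
  classical
  have hI0 : (I:ℝ) ≠ 0 := by positivity
  have hJ0 : (J:ℝ) ≠ 0 := by positivity
  have hITR : (IT:ℝ) ≠ 0 := by have : 0 < IT := hIT1; positivity
  have hJTR : (JT:ℝ) ≠ 0 := by have : 0 < JT := hJT1; positivity
  have hITlt : IT < I := by omega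
  have hJTlt : JT < J := by omega
  have hI1 : ((I:ℝ) - 1) ≠ 0 := by
    have : (2:ℝ) ≤ I := by exact_mod_cast hI
    linarith
  have hJ1 : ((J:ℝ) - 1) ≠ 0 := by
    have : (2:ℝ) ≤ J := by exact_mod_cast hJ
    linarith
  have hITc : ((I:ℝ) - IT) ≠ 0 := by
    have : (IT:ℝ) < I := by exact_mod_cast hITlt
    linarith
  have hJTc : ((J:ℝ) - JT) ≠ 0 := by
    have : (JT:ℝ) < J := by exact_mod_cast hJTlt
    linarith
  have hIsz : ∀ δ : Gp, IszR I IT δ ≠ 0 := by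
    intro δ; unfold IszR; split <;> assumption
  have hJsz : ∀ δ : Gp, JszR J JT δ ≠ 0 := by
    intro δ; unfold JszR; split <;> assumption
  -- cardinalities
  have hPcard : (Finset.powersetCard IT (univ : Finset (Fin I))).card = I.choose IT := by
    rw [Finset.card_powersetCard, Finset.card_univ, Fintype.card_fin]
  have hQcard : (Finset.powersetCard JT (univ : Finset (Fin J))).card = J.choose JT := by
    rw [Finset.card_powersetCard, Finset.card_univ, Fintype.card_fin]
  have hDcard : (designSets I J IT JT).card = I.choose IT * J.choose JT := by
    rw [designSets, Finset.card_product, hPcard, hQcard]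
  have hN1pos : 0 < I.choose IT := Nat.choose_pos (by omega)
  have hN2pos : 0 < J.choose JT := Nat.choose_pos (by omega)
  have hN1 : ((I.choose IT : ℕ) : ℝ) ≠ 0 := by positivity
  have hN2 : ((J.choose JT : ℕ) : ℝ) ≠ 0 := by positivity
  have hDne : ((designSets I J IT JT).card : ℝ) ≠ 0 := by
    rw [hDcard]; push_cast; positivity
  -- integral reduction
  have hint : ∀ h : Omg I J → ℝ, ∫ ω, h ω ∂(smrd I J IT JT)
      = (∑ ω ∈ designSets I J IT JT, h ω) / ((designSets I J IT JT).card : ℝ) := by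
    intro h
    exact integral_uniformOn (designSets I J IT JT) h
  have hmemD : ∀ ω ∈ designSets I J IT JT, ω.1.card = IT ∧ ω.2.card = JT := by
    intro ω hω
    rw [designSets, Finset.mem_product] at hω
    exact ⟨(Finset.mem_powersetCard_univ.1 hω.1), (Finset.mem_powersetCard_univ.1 hω.2)⟩
  -- zero-sum facts
  have hsa := fun δ => sum_aeff hI0 hJ0 (y δ)
  have hsb := fun δ => sum_beff hI0 hJ0 (y δ)
  have hdr := fun δ => dcr_row hI0 hJ0 (y δ)
  have hdc := fun δ => dcr_col hI0 hJ0 (y δ)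
  -- the mean of each estimator
  have hmean : ∀ δ : Gp, ∫ ω, mhat y δ ω ∂(smrd I J IT JT) = grandMean (y δ) := by
    intro δ
    rw [hint]
    have hexp : ∀ ω ∈ designSets I J IT JT, mhat y δ ω = grandMean (y δ)
        + ((eB δ / IszR I IT δ) * ∑ i ∈ ω.1, (rowMean (y δ) i - grandMean (y δ))
          + (eS δ / JszR J JT δ) * ∑ j ∈ ω.2, (colMean (y δ) j - grandMean (y δ))
          + ((eB δ * eS δ) / (IszR I IT δ * JszR J JT δ))
              * ∑ i ∈ ω.1, ∑ j ∈ ω.2, dcr (y δ) i j) := by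
      intro ω hω
      obtain ⟨h1, h2⟩ := hmemD ω hω
      rw [mhat_eq hI hJ hIT1 hIT2 hJT1 hJT2 y δ ω h1 h2]
      ring
    rw [Finset.sum_congr rfl hexp, Finset.sum_add_distrib, Finset.sum_const,
      mean_pieces I J IT JT hIT1 hJT1 _ _ _ (hsa δ) (hsb δ) (hdr δ) _ _ _,
      add_zero, nsmul_eq_mul]
    field_simp
  -- rewrite the covariance as a sum
  rw [cov, hmean γ, hmean γ', hint]
  -- centered estimators
  set p1 : ℝ := eB γ / IszR I IT γ with hp1
  set p2 : ℝ := eS γ / JszR J JT γ with hp2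
  set p3 : ℝ := (eB γ * eS γ) / (IszR I IT γ * JszR J JT γ) with hp3
  set q1 : ℝ := eB γ' / IszR I IT γ' with hq1
  set q2 : ℝ := eS γ' / JszR J JT γ' with hq2
  set q3 : ℝ := (eB γ' * eS γ') / (IszR I IT γ' * JszR J JT γ') with hq3
  have hcent : ∀ ω ∈ designSets I J IT JT,
      (mhat y γ ω - grandMean (y γ)) * (mhat y γ' ω - grandMean (y γ'))
        = (p1 * ∑ i ∈ ω.1, (rowMean (y γ) i - grandMean (y γ))
            + p2 * ∑ j ∈ ω.2, (colMean (y γ) j - grandMean (y γ))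
            + p3 * ∑ i ∈ ω.1, ∑ j ∈ ω.2, dcr (y γ) i j)
          * (q1 * ∑ i ∈ ω.1, (rowMean (y γ') i - grandMean (y γ'))
            + q2 * ∑ j ∈ ω.2, (colMean (y γ') j - grandMean (y γ'))
            + q3 * ∑ i ∈ ω.1, ∑ j ∈ ω.2, dcr (y γ') i j) := by
    intro ω hω
    obtain ⟨h1, h2⟩ := hmemD ω hω
    rw [mhat_eq hI hJ hIT1 hIT2 hJT1 hJT2 y γ ω h1 h2,
      mhat_eq hI hJ hIT1 hIT2 hJT1 hJT2 y γ' ω h1 h2, hp1, hp2, hp3, hq1, hq2, hq3]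
    ring
  have hval := core I J IT JT hI hJ hIT1 hJT1
    (fun i => rowMean (y γ) i - grandMean (y γ))
    (fun i => rowMean (y γ') i - grandMean (y γ'))
    (fun j => colMean (y γ) j - grandMean (y γ))
    (fun j => colMean (y γ') j - grandMean (y γ'))
    (fun i j => dcr (y γ) i j) (fun i j => dcr (y γ') i j)
    (hsa γ) (hsa γ') (hsb γ) (hsb γ') (hdr γ) (hdc γ) (hdr γ') (hdc γ')
    p1 p2 p3 q1 q2 q3
  have hsum : ∑ ω ∈ designSets I J IT JT,
      (mhat y γ ω - grandMean (y γ)) * (mhat y γ' ω - grandMean (y γ'))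
      = ((Finset.powersetCard JT (univ : Finset (Fin J))).card : ℝ) * (p1 * q1)
            * (Kc I IT * ∑ i, (rowMean (y γ) i - grandMean (y γ))
                * (rowMean (y γ') i - grandMean (y γ')))
        + ((Finset.powersetCard IT (univ : Finset (Fin I))).card : ℝ) * (p2 * q2)
            * (Kc J JT * ∑ j, (colMean (y γ) j - grandMean (y γ))
                * (colMean (y γ') j - grandMean (y γ')))
        + (p3 * q3) * (Kc I IT * (Kc J JT * ∑ i, ∑ j, dcr (y γ) i j * dcr (y γ') i j)) := by
    rw [Finset.sum_congr rfl hcent]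
    simp only [designSets, Finset.sum_product]
    exact hval
  rw [hsum]
  -- closed forms of the K coefficients
  have hc1N : (I:ℝ) * (((I-1).choose (IT-1) : ℕ) : ℝ) = ((I.choose IT : ℕ) : ℝ) * IT := by
    have h := Nat.add_one_mul_choose_eq (I-1) (IT-1)
    rw [show I-1+1 = I by omega, show IT-1+1 = IT by omega] at h
    exact_mod_cast congrArg (fun m : ℕ => (m:ℝ)) h
  have hd1N : (J:ℝ) * (((J-1).choose (JT-1) : ℕ) : ℝ) = ((J.choose JT : ℕ) : ℝ) * JT := by
    have h := Nat.add_one_mul_choose_eq (J-1) (JT-1)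
    rw [show J-1+1 = J by omega, show JT-1+1 = JT by omega] at h
    exact_mod_cast congrArg (fun m : ℕ => (m:ℝ)) h
  have hKcI : Kc I IT = ((I.choose IT : ℕ) : ℝ) * IT * ((I:ℝ) - IT) / ((I:ℝ) * ((I:ℝ) - 1)) := by
    rw [Kc]
    rw [div_eq_div_iff hI1 (by exact mul_ne_zero hI0 hI1)]
    have : (((I-1).choose (IT-1) : ℕ) : ℝ) * ((I:ℝ) - IT) * ((I:ℝ) * ((I:ℝ) - 1))
        = ((I:ℝ) * (((I-1).choose (IT-1) : ℕ) : ℝ)) * (((I:ℝ) - IT) * ((I:ℝ) - 1)) := by ring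
    rw [this, hc1N]
    ring
  have hKcJ : Kc J JT = ((J.choose JT : ℕ) : ℝ) * JT * ((J:ℝ) - JT) / ((J:ℝ) * ((J:ℝ) - 1)) := by
    rw [Kc]
    rw [div_eq_div_iff hJ1 (by exact mul_ne_zero hJ0 hJ1)]
    have : (((J-1).choose (JT-1) : ℕ) : ℝ) * ((J:ℝ) - JT) * ((J:ℝ) * ((J:ℝ) - 1))
        = ((J:ℝ) * (((J-1).choose (JT-1) : ℕ) : ℝ)) * (((J:ℝ) - JT) * ((J:ℝ) - 1)) := by ring
    rw [this, hd1N]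
    ring
  rw [hKcI, hKcJ, hPcard, hQcard, hDcard, etaB_eq, etaS_eq, omegaB_comb, omegaS_comb,
    omegaBS_comb, hp1, hp2, hp3, hq1, hq2, hq3]
  clear hint hmemD hmean hsa hsb hdr hdc
  clear hcent hval hsum
  clear hp1 hp2 hp3 hq1 hq2 hq3
  clear_value p1 p2 p3 q1 q2 q3
  clear p1 p2 p3 q1 q2 q3
  push_cast
  have hw1 : IszR I IT γ ≠ 0 := hIsz γ
  have hw2 : IszR I IT γ' ≠ 0 := hIsz γ'
  have hx1 : JszR J JT γ ≠ 0 := hJsz γ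
  have hx2 : JszR J JT γ' ≠ 0 := hJsz γ'
  generalize (∑ i, (rowMean (y γ) i - grandMean (y γ)) * (rowMean (y γ') i - grandMean (y γ'))) = Sa
  generalize (∑ j, (colMean (y γ) j - grandMean (y γ)) * (colMean (y γ') j - grandMean (y γ'))) = Sb
  generalize (∑ i, ∑ j, dcr (y γ) i j * dcr (y γ') i j) = Sr
  generalize hg1 : IszR I IT γ = wv at hw1 ⊢
  generalize hg2 : IszR I IT γ' = wv' at hw2 ⊢
  generalize hg3 : JszR J JT γ = xv at hx1 ⊢
  generalize hg4 : JszR J JT γ' = xv' at hx2 ⊢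
  generalize hg5 : ((I.choose IT : ℕ) : ℝ) = n1 at hN1 ⊢
  generalize hg6 : ((J.choose JT : ℕ) : ℝ) = n2 at hN2 ⊢
  field_simp

end SMRD

end
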